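/- Let θ ∈ (1/2, 1). Suppose {x^k}_{k≥0} satisfies conditions H1 and H3, Φ is lower semicontinuous at the point x̄ from condition H3, and {ε_k}_{k≥1} are nonnegative reals with ε_k ≤ γ̃·k^{θ/(1−2θ)} for all k ≥ k̃₀, for some k̃₀ ∈ ℕ and γ̃ > 0. Suppose further there exist κ > 0, a nonnegative integer k1 and k̃ ≥ k1 such that for every k ≥ k̃ with Φ(x^k) > Φ(x̄) one has (Φ(x^k) − Φ(x̄))^θ ≤ κ·( Σ_{i=k−k1}^{k+k1} Ξ_{i−1} + ε_k ). Then there exists γ > 0 such that C_k − Φ(x̄) ≤ γ·k^{1/(1−2θ)} for all sufficiently large k. -/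

import Mathlib

open Real Filter

/-- Tangent-line inequality for `t ↦ t^(-β)`, `β ≥ 1`. -/
lemma aux_bern {β y z : ℝ} (hβ : 1 ≤ β) (hy : 0 < y) (hxy : y ≤ z) :
    y ^ (-β) - z ^ (-β) ≤ β * (z - y) * y ^ (-β - 1) := by
  set s : ℝ := (z - y) / y with hs
  have hs0 : 0 ≤ s := div_nonneg (by linarith) hy.le
  have h1s : (0:ℝ) < 1 + s := by linarith
  have hsy : s * y = z - y := by rw [hs, div_mul_cancel₀ _ hy.ne']
  have hfrac : s / (1 + s) ≤ s := by
    rw [div_le_iff₀ h1s]; nlinarith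
  have hbern : 1 - β * s ≤ (1 + s) ^ (-β) := by
    have hm1 : (-1:ℝ) ≤ -(s / (1 + s)) := by
      have h2 : s / (1 + s) ≤ 1 := by rw [div_le_one h1s]; linarith
      linarith
    have h := one_add_mul_self_le_rpow_one_add hm1 hβ
    have he : 1 + -(s / (1 + s)) = (1 + s)⁻¹ := by field_simp; ring
    rw [he, Real.inv_rpow h1s.le, ← Real.rpow_neg h1s.le] at h
    have h3 : β * (s / (1 + s)) ≤ β * s :=
      mul_le_mul_of_nonneg_left hfrac (by linarith)
    linarith
  have hzpow : z ^ (-β) = y ^ (-β) * (1 + s) ^ (-β) := by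
    have hxeq : z = y * (1 + s) := by linear_combination -hsy
    rw [hxeq, Real.mul_rpow hy.le h1s.le]
  have hypos : (0:ℝ) < y ^ (-β) := Real.rpow_pos_of_pos hy _
  have hpow1 : y ^ (-β - 1) = y ^ (-β) * y⁻¹ := by
    rw [show -β - 1 = -β + (-1) by ring, Real.rpow_add hy, Real.rpow_neg_one]
  rw [hzpow, hpow1]
  have key : y ^ (-β) * (1 - (1 + s) ^ (-β)) ≤ y ^ (-β) * (β * s) :=
    mul_le_mul_of_nonneg_left (by linarith) hypos.le
  have hfin : β * (z - y) * (y ^ (-β) * y⁻¹) = y ^ (-β) * (β * s) := by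
    rw [← hsy]; field_simp
  rw [hfin]; linarith

/-- Rate lemma: a nonincreasing nonnegative sequence satisfying the gap-`p` KL recursion
with polynomially decaying error has rate `n^{-β}`. -/
lemma aux_rate (θ β A B : ℝ) (hθ0 : 1/2 < θ) (hθ1 : θ < 1) (hβ : β = 1/(2*θ-1))
    (hA : 0 ≤ A) (hB : 0 ≤ B) (p N0 : ℕ) (hp : 1 ≤ p) (hN01 : 1 ≤ N0) (hN02 : 2*p ≤ N0)
    (s : ℕ → ℝ) (hs0 : ∀ n, 0 ≤ s n) (hanti : Antitone s)
    (hrec : ∀ n, N0 ≤ n → s n ^ (2*θ) ≤ A * (s (n - p) - s n) + B * (n:ℝ) ^ (-β-1)) :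
    ∃ γ : ℝ, 0 < γ ∧ ∀ n, N0 ≤ n → s n ≤ γ * (n:ℝ) ^ (-β) := by
  have h2θ1 : (0:ℝ) < 2*θ - 1 := by linarith
  have hβpos : 0 < β := by rw [hβ]; positivity
  have hβ1 : 1 ≤ β := by rw [hβ, le_div_iff₀ h2θ1]; linarith
  have hβmul : β * (2*θ-1) = 1 := by rw [hβ]; field_simp
  have hrel : β * (2*θ) = β + 1 := by linear_combination hβmul
  set c1 : ℝ := A * β * p * 2^(β+1) with hc1
  have hc1nn : 0 ≤ c1 := by positivity
  set γ : ℝ := max (max 1 (s N0 * ((N0:ℝ)+p)^β + 1)) ((c1 + B + 1) ^ (1/(2*θ-1))) with hγdef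
  have hγ1 : 1 ≤ γ := le_trans (le_max_left _ _) (le_max_left _ _)
  have hγpos : 0 < γ := lt_of_lt_of_le one_pos hγ1
  have hγbase : s N0 * ((N0:ℝ)+p)^β ≤ γ := by
    have := le_trans (le_max_right 1 (s N0 * ((N0:ℝ)+p)^β + 1)) (le_max_left _ ((c1 + B + 1) ^ (1/(2*θ-1))))
    linarith
  have hcB : (0:ℝ) ≤ c1 + B + 1 := by linarith
  have hγpow : c1 + B + 1 ≤ γ ^ (2*θ-1) := by
    have hle : (c1+B+1)^(1/(2*θ-1)) ≤ γ := le_max_right _ _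
    calc c1+B+1 = ((c1+B+1)^(1/(2*θ-1)))^(2*θ-1) := by
          rw [← Real.rpow_mul hcB, one_div_mul_cancel h2θ1.ne', Real.rpow_one]
      _ ≤ γ^(2*θ-1) := Real.rpow_le_rpow (Real.rpow_nonneg hcB _) hle h2θ1.le
  refine ⟨γ, hγpos, ?_⟩
  intro n
  induction n using Nat.strong_induction_on with
  | _ n ih =>
  intro hn
  have hn1 : 1 ≤ n := le_trans hN01 hn
  have hnpos : (0:ℝ) < (n:ℝ) := by exact_mod_cast hn1
  by_cases hcase : n < N0 + p
  · -- base case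
    have h1 : s n ≤ s N0 := hanti hn
    have hNp : (0:ℝ) < (N0:ℝ)+p := by positivity
    have h2 : ((N0:ℝ)+p)^(-β) ≤ (n:ℝ)^(-β) := by
      have hle : (n:ℝ) ≤ (N0:ℝ)+(p:ℝ) := by exact_mod_cast hcase.le
      exact Real.rpow_le_rpow_of_nonpos hnpos hle (by linarith)
    have h3 : s N0 ≤ γ * ((N0:ℝ)+p)^(-β) := by
      have hmul := mul_le_mul_of_nonneg_right hγbase (Real.rpow_nonneg hNp.le (-β))
      rw [mul_assoc, ← Real.rpow_add hNp] at hmul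
      simpa using hmul
    calc s n ≤ s N0 := h1
      _ ≤ γ * ((N0:ℝ)+p)^(-β) := h3
      _ ≤ γ * (n:ℝ)^(-β) := mul_le_mul_of_nonneg_left h2 hγpos.le
  · push_neg at hcase
    have hnp : N0 ≤ n - p := by omega
    have hIH := ih (n - p) (by omega) hnp
    by_contra hcon
    push_neg at hcon
    have hnR : ((n - p : ℕ):ℝ) = (n:ℝ) - p := by
      have : p ≤ n := by omega
      push_cast [this]; ring
    have hnpR : (0:ℝ) < (n:ℝ) - (p:ℝ) := by
      have : (p:ℝ) < (n:ℝ) := by exact_mod_cast (by omega : p < n)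
      linarith
    have hpow_n : (0:ℝ) < (n:ℝ)^(-β-1) := Real.rpow_pos_of_pos hnpos _
    have hgn : (0:ℝ) < γ * (n:ℝ)^(-β) := by positivity
    have h1 : (γ * (n:ℝ)^(-β)) ^ (2*θ) < s n ^ (2*θ) :=
      Real.rpow_lt_rpow hgn.le hcon (by linarith)
    have h1' : (γ * (n:ℝ)^(-β)) ^ (2*θ) = γ^(2*θ) * (n:ℝ)^(-β-1) := by
      rw [Real.mul_rpow hγpos.le (Real.rpow_nonneg hnpos.le _), ← Real.rpow_mul hnpos.le,
        show -β*(2*θ) = -β-1 by linear_combination -hrel]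
    have h2 := hrec n (by omega)
    have h3 : s (n-p) - s n ≤ γ * ((n:ℝ)-p)^(-β) - γ*(n:ℝ)^(-β) := by
      rw [hnR] at hIH
      linarith
    have h5 : ((n:ℝ)-p)^(-β) - (n:ℝ)^(-β) ≤ β * p * ((n:ℝ)-p)^(-β-1) := by
      have hb := aux_bern hβ1 hnpR (by linarith [(by positivity : (0:ℝ) ≤ (p:ℝ))] : (n:ℝ)-(p:ℝ) ≤ (n:ℝ))
      have : (n:ℝ) - ((n:ℝ)-(p:ℝ)) = (p:ℝ) := by ring
      rw [this] at hb
      exact hb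
    have h6 : ((n:ℝ)-p)^(-β-1) ≤ 2^(β+1) * (n:ℝ)^(-β-1) := by
      have hhalf : (n:ℝ)/2 ≤ (n:ℝ)-p := by
        have : (2*p : ℕ) ≤ n := le_trans hN02 hn
        have h2p : ((p:ℝ)) * 2 ≤ (n:ℝ) := by exact_mod_cast (by omega : p * 2 ≤ n)
        linarith
      have hmono := Real.rpow_le_rpow_of_nonpos (show (0:ℝ) < (n:ℝ)/2 by positivity)
        hhalf (by linarith : -β-1 ≤ 0)
      have heq : ((n:ℝ)/2)^(-β-1) = 2^(β+1) * (n:ℝ)^(-β-1) := by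
        rw [Real.div_rpow hnpos.le (by norm_num), div_eq_mul_inv,
          ← Real.rpow_neg (by norm_num : (0:ℝ) ≤ 2)]
        rw [show -(-β-1) = β+1 by ring]
        ring
      rw [heq] at hmono
      exact hmono
    have hAγ : (0:ℝ) ≤ A * γ := by positivity
    have hβp : (0:ℝ) ≤ β * p := by positivity
    have hchain : γ^(2*θ) * (n:ℝ)^(-β-1) < (c1*γ + B) * (n:ℝ)^(-β-1) := by
      calc γ^(2*θ) * (n:ℝ)^(-β-1) = (γ * (n:ℝ)^(-β)) ^ (2*θ) := h1'.symm
        _ < s n ^ (2*θ) := h1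
        _ ≤ A * (s (n-p) - s n) + B * (n:ℝ)^(-β-1) := h2
        _ ≤ A * (γ * ((n:ℝ)-p)^(-β) - γ*(n:ℝ)^(-β)) + B * (n:ℝ)^(-β-1) := by
            have := mul_le_mul_of_nonneg_left h3 hA
            linarith
        _ = A * γ * (((n:ℝ)-p)^(-β) - (n:ℝ)^(-β)) + B * (n:ℝ)^(-β-1) := by ring
        _ ≤ A * γ * (β * p * ((n:ℝ)-p)^(-β-1)) + B * (n:ℝ)^(-β-1) := by
            have := mul_le_mul_of_nonneg_left h5 hAγ
            linarith
        _ ≤ A * γ * (β * p * (2^(β+1) * (n:ℝ)^(-β-1))) + B * (n:ℝ)^(-β-1) := by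
            have h6' := mul_le_mul_of_nonneg_left h6 hβp
            have := mul_le_mul_of_nonneg_left h6' hAγ
            linarith
        _ = (c1*γ + B) * (n:ℝ)^(-β-1) := by rw [hc1]; ring
    have h8 : γ^(2*θ) < c1*γ + B := lt_of_mul_lt_mul_right hchain hpow_n.le
    have h9 : γ * (c1 + B + 1) ≤ γ^(2*θ) := by
      calc γ*(c1+B+1) ≤ γ * γ^(2*θ-1) := mul_le_mul_of_nonneg_left hγpow hγpos.le
        _ = γ^(2*θ) := by
            nth_rewrite 1 [← Real.rpow_one γ]
            rw [← Real.rpow_add hγpos]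
            norm_num
    nlinarith [h8, h9, mul_le_mul_of_nonneg_left hγ1 hB]

open Real Filter
lemma aux_sq (κ P d e : ℝ) (hd : 0 ≤ d) (he : 0 ≤ e) :
    (κ*(P*Real.sqrt d + e))^2 ≤ 2*κ^2*P^2*d + 2*κ^2*e^2 := by
  set u := Real.sqrt d with hu
  have h1 : u^2 = d := Real.sq_sqrt hd
  rw [← h1]
  nlinarith [sq_nonneg (κ*(P*u - e))]


set_option maxHeartbeats 2000000 in
/-- Lemma 3.4, case `θ ∈ (1/2,1)`: under conditions H1, H3 and lsc of `Φ` at `x̄`,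
if `ε_k ≤ γ̃·k^{θ/(1−2θ)}` eventually and the surrogate KL-type inequality
`(Φ(x^k) − Φ(x̄))^θ ≤ κ·(Σ_{i=k−k1}^{k+k1} Ξ_{i−1} + ε_k)` holds for all large `k`
with `Φ(x^k) > Φ(x̄)`, then `C_k − Φ(x̄) ≤ γ·k^{1/(1−2θ)}` for large `k`. -/
theorem stmt_10 {X : Type*} [NormedAddCommGroup X] [NormedSpace ℝ X]
    (Φ : X → ℝ) (x : ℕ → X) (a τs C : ℕ → ℝ) (abar τ : ℝ)
    (habar : 0 < abar) (hτ0 : 0 < τ) (hτ1 : τ ≤ 1)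
    (ha : ∀ k : ℕ, abar ≤ a (k + 1))
    (hτs : ∀ k : ℕ, τs (k + 1) ∈ Set.Icc τ 1)
    (hC0 : C 0 = Φ (x 0))
    (hCrec : ∀ k : ℕ, C (k + 1) = (1 - τs (k + 1)) * C k + τs (k + 1) * Φ (x (k + 1)))
    (hH1 : ∀ k : ℕ, Φ (x (k + 1)) + a (k + 1) * ‖x (k + 1) - x k‖ ^ 2 ≤ C k)
    (hbdd : ∃ M : ℝ, ∀ k : ℕ, M ≤ Φ (x k))
    -- condition H3 and lower semicontinuity at x̄
    (xbar : X) (ks : ℕ → ℕ) (hks : StrictMono ks)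
    (hxconv : Filter.Tendsto (fun j => x (ks j)) Filter.atTop (nhds xbar))
    (hlimsup : Filter.limsup (fun j => Φ (x (ks j))) Filter.atTop ≤ Φ xbar)
    (hlsc : LowerSemicontinuousAt Φ xbar)
    -- exponent and error sequence
    (θ : ℝ) (hθ0 : 1 / 2 < θ) (hθ : θ < 1)
    (eps : ℕ → ℝ) (heps : ∀ k : ℕ, 1 ≤ k → 0 ≤ eps k)
    (ktil0 : ℕ) (γtil : ℝ) (hγtil : 0 < γtil)
    (hepsdecay : ∀ k : ℕ, ktil0 ≤ k → eps k ≤ γtil * (k : ℝ) ^ (θ / (1 - 2 * θ)))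
    -- surrogate KL inequality of exponent θ along the sequence
    (κ : ℝ) (hκ : 0 < κ) (k1 ktil : ℕ) (hktil : k1 ≤ ktil)
    (hKL : ∀ k : ℕ, ktil ≤ k → Φ xbar < Φ (x k) →
      (Φ (x k) - Φ xbar) ^ θ ≤
        κ * ((∑ i ∈ Finset.Icc (k - k1) (k + k1), Real.sqrt (C (i - 1) - C i)) + eps k)) :
    ∃ γ : ℝ, 0 < γ ∧
      ∀ᶠ k in Filter.atTop, C k - Φ xbar ≤ γ * (k : ℝ) ^ (1 / (1 - 2 * θ)) := by
  obtain ⟨M, hM⟩ := hbdd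
  have h2θ1 : (0:ℝ) < 2*θ - 1 := by linarith
  set β : ℝ := 1/(2*θ-1) with hβ
  have hβpos : 0 < β := by rw [hβ]; positivity
  have hβm : β*(2*θ-1) = 1 := by rw [hβ]; field_simp
  have hexp_eq : 1/(1-2*θ) = -β := by
    rw [hβ]; field_simp
    rw [div_eq_iff (by linarith : (1:ℝ)-2*θ ≠ 0)]; ring
  -- C is nonincreasing and bounded below
  have hΦleC : ∀ k, Φ (x (k+1)) ≤ C k := by
    intro k
    have h1 := hH1 k
    have h2 : 0 ≤ a (k+1) * ‖x (k+1) - x k‖^2 :=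
      mul_nonneg (le_trans habar.le (ha k)) (by positivity)
    linarith
  have hCstep : ∀ k, C (k+1) ≤ C k := by
    intro k
    obtain ⟨hτl, hτu⟩ := hτs k
    have h1 := hΦleC k
    have hτpos : 0 < τs (k+1) := lt_of_lt_of_le hτ0 hτl
    rw [hCrec k]
    have h2 : 0 ≤ τs (k+1) * (C k - Φ (x (k+1))) := mul_nonneg hτpos.le (by linarith)
    linarith
  have hCanti : Antitone C := antitone_nat_of_succ_le hCstep
  have hCM : ∀ k, M ≤ C k := by
    intro k; induction k with
    | zero => rw [hC0]; exact hM 0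
    | succ k ihk =>
      rw [hCrec k]
      obtain ⟨hτl, hτu⟩ := hτs k
      have h1 := hM (k+1)
      have e1 : 0 ≤ (1 - τs (k+1)) * (C k - M) := mul_nonneg (by linarith) (by linarith)
      have e2 : 0 ≤ τs (k+1) * (Φ (x (k+1)) - M) := mul_nonneg (by linarith) (by linarith)
      linarith
  have hbddC : BddBelow (Set.range C) := ⟨M, by rintro y ⟨k, rfl⟩; exact hCM k⟩
  set L : ℝ := ⨅ k, C k with hL
  have htend : Tendsto C atTop (nhds L) := tendsto_atTop_ciInf hCanti hbddC
  have hLleC : ∀ k, L ≤ C k := fun k => ciInf_le hbddC k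
  have htend1 : Tendsto (fun k => C (k+1)) atTop (nhds L) :=
    htend.comp (tendsto_add_atTop_nat 1)
  have hgap : Tendsto (fun k => C k - (C k - C (k+1))/τ) atTop (nhds L) := by
    have h := (htend.sub ((htend.sub htend1).div_const τ))
    simpa using h
  have hΦlow : ∀ k, C k - (C k - C (k+1))/τ ≤ Φ (x (k+1)) := by
    intro k
    obtain ⟨hτl, hτu⟩ := hτs k
    have hτpos : 0 < τs (k+1) := lt_of_lt_of_le hτ0 hτl
    have hnn : Φ (x (k+1)) ≤ C k := hΦleC k
    have h1 : C k - C (k+1) = τs (k+1) * (C k - Φ (x (k+1))) := by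
      linear_combination -hCrec k
    have key : τ * (C k - Φ (x (k+1))) ≤ C k - C (k+1) := by
      have e1 : τ * (C k - Φ (x (k+1))) ≤ τs (k+1) * (C k - Φ (x (k+1))) :=
        mul_le_mul_of_nonneg_right hτl (by linarith)
      linarith
    have h2 : C k - Φ (x (k+1)) ≤ (C k - C (k+1))/τ := by
      rw [le_div_iff₀ hτ0]; linarith
    linarith
  have hΦtend1 : Tendsto (fun k => Φ (x (k+1))) atTop (nhds L) :=
    tendsto_of_tendsto_of_tendsto_of_le_of_le hgap htend hΦlow hΦleC
  have hΦtend : Tendsto (fun k => Φ (x k)) atTop (nhds L) :=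
    (tendsto_add_atTop_iff_nat 1).mp hΦtend1
  have hsubt : Tendsto (fun j => Φ (x (ks j))) atTop (nhds L) :=
    hΦtend.comp hks.tendsto_atTop
  have hLle : L ≤ Φ xbar := hsubt.limsup_eq ▸ hlimsup
  have hgeL : Φ xbar ≤ L := by
    by_contra hcon
    push_neg at hcon
    have hy2 : (L + Φ xbar)/2 < Φ xbar := by linarith
    have hev : ∀ᶠ z in nhds xbar, (L + Φ xbar)/2 < Φ z := hlsc _ hy2
    have hev2 : ∀ᶠ j in atTop, (L + Φ xbar)/2 < Φ (x (ks j)) := hxconv.eventually hev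
    have h3 : (L + Φ xbar)/2 ≤ L := ge_of_tendsto hsubt (hev2.mono fun j hj => hj.le)
    linarith
  have hLeq : L = Φ xbar := le_antisymm hLle hgeL
  have hr0 : ∀ k, 0 ≤ C k - Φ xbar := by
    intro k; have := hLleC k; rw [hLeq] at this; linarith
  have hrtend : Tendsto (fun k => C k - Φ xbar) atTop (nhds 0) := by
    have h := htend.sub_const (Φ xbar)
    rw [hLeq] at h
    simpa using h
  obtain ⟨Kr, hKr⟩ := eventually_atTop.mp (hrtend.eventually_le_const one_pos)
  -- constants
  set p : ℕ := 2*k1+1 with hpdef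
  set A : ℝ := 4/τ^2 + 8*κ^2*((p:ℝ))^2 with hAdef
  set B' : ℝ := 8*κ^2*γtil^2*2^(β+1) with hBdef
  have hA : 0 ≤ A := by positivity
  have hB' : 0 ≤ B' := by positivity
  set K : ℕ := max (max ktil ktil0) (max (k1+1) (Kr + k1 + 1)) with hKdef
  set N0 : ℕ := max (K + k1) (2*p+1) with hN0def
  -- the key recursion
  have hrec : ∀ n, N0 ≤ n →
      (C n - Φ xbar) ^ (2*θ) ≤ A * ((C (n-p) - Φ xbar) - (C n - Φ xbar)) + B' * (n:ℝ)^(-β-1) := by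
    intro n hn
    have hKk1 : k1 + 1 ≤ K := le_trans (le_max_left _ _) (le_max_right _ _)
    have hKktil : ktil ≤ K := le_trans (le_max_left _ _) (le_max_left _ _)
    have hKktil0 : ktil0 ≤ K := le_trans (le_max_right _ _) (le_max_left _ _)
    have hKKr : Kr + k1 + 1 ≤ K := le_trans (le_max_right _ _) (le_max_right _ _)
    have hnK : K + k1 ≤ n := le_trans (le_max_left _ _) hn
    have hn2p : 2*p+1 ≤ n := le_trans (le_max_right _ _) hn
    set k : ℕ := n - k1 with hkdef
    have hkK : K ≤ k := by omega
    have hnk : n = k + k1 := by omega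
    have hkk1 : k1 + 1 ≤ k := by omega
    set m : ℕ := n - p with hmdef
    have hmk : m = k - k1 - 1 := by omega
    have hmKr : Kr ≤ m := by omega
    have hnpos : (0:ℝ) < (n:ℝ) := by exact_mod_cast (by omega : 0 < n)
    have hpow_n : (0:ℝ) < (n:ℝ)^(-β-1) := Real.rpow_pos_of_pos hnpos _
    have hΔ0 : 0 ≤ C m - C n := by
      have := hCanti (show m ≤ n by omega); linarith
    have hΔ1 : C m - C n ≤ 1 := by
      have h1 := hKr m hmKr; have h2 := hr0 n; linarith
    have hrn0 : 0 ≤ C n - Φ xbar := hr0 n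
    have hmono1 : C (k-1) ≤ C m := hCanti (by omega : m ≤ k-1)
    have hmono2 : C n ≤ C k := hCanti (by omega : k ≤ n)
    have hmono3 : C k ≤ C (k-1) := hCanti (by omega : k-1 ≤ k)
    have hk1eq : k = (k-1) + 1 := by omega
    have hrk := hCrec (k-1)
    rw [← hk1eq] at hrk
    have hτsk := hτs (k-1)
    rw [← hk1eq] at hτsk
    obtain ⟨hτl, hτu⟩ := hτsk
    have hτkpos : 0 < τs k := lt_of_lt_of_le hτ0 hτl
    have h1drop : C (k-1) - C k = τs k * (C (k-1) - Φ (x k)) := by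
      linear_combination -hrk
    -- easy-case helper
    have heasy : τ * (C n - Φ xbar) ≤ 2*(C m - C n) →
        (C n - Φ xbar) ^ (2*θ) ≤ A * ((C m - Φ xbar) - (C n - Φ xbar)) + B' * (n:ℝ)^(-β-1) := by
      intro hτrn
      have hsimp : (C m - Φ xbar) - (C n - Φ xbar) = C m - C n := by ring
      rw [hsimp]
      rcases eq_or_lt_of_le hΔ0 with hΔz | hΔpos
      · have hrnz : C n - Φ xbar = 0 := by
          refine le_antisymm (le_of_mul_le_mul_left ?_ hτ0) hrn0
          have : τ * (C n - Φ xbar) ≤ 0 := by linarith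
          linarith
        rw [hrnz, Real.zero_rpow (by positivity : (2*θ) ≠ 0)]
        have h0 : 0 ≤ B' * (n:ℝ)^(-β-1) := by positivity
        have h1 : A * (C m - C n) = 0 := by rw [← hΔz, mul_zero]
        linarith
      · have h2τ : (1:ℝ) ≤ 2/τ := by
          rw [le_div_iff₀ hτ0]; linarith
        have hstep1 : C n - Φ xbar ≤ (2/τ) * (C m - C n) := by
          rw [div_mul_eq_mul_div, le_div_iff₀ hτ0]; linarith
        calc (C n - Φ xbar) ^ (2*θ) ≤ ((2/τ) * (C m - C n)) ^ (2*θ) :=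
              Real.rpow_le_rpow hrn0 hstep1 (by linarith)
          _ = (2/τ)^(2*θ) * (C m - C n)^(2*θ) :=
              Real.mul_rpow (by positivity) hΔ0
          _ ≤ (2/τ)^(2:ℝ) * (C m - C n)^(1:ℝ) := by
              apply mul_le_mul
              · exact Real.rpow_le_rpow_of_exponent_le h2τ (by linarith)
              · exact Real.rpow_le_rpow_of_exponent_ge hΔpos hΔ1 (by linarith)
              · exact Real.rpow_nonneg hΔ0 _
              · exact Real.rpow_nonneg (by positivity) _
          _ = (2/τ)^2 * (C m - C n) := by rw [Real.rpow_two, Real.rpow_one]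
          _ ≤ A * (C m - C n) + B' * (n:ℝ)^(-β-1) := by
              have hAge : (2/τ)^2 ≤ A := by
                have h8 : (0:ℝ) ≤ 8*κ^2*((p:ℝ))^2 := by positivity
                rw [hAdef, div_pow]
                norm_num
                positivity
              have h0 : 0 ≤ B' * (n:ℝ)^(-β-1) := by positivity
              have h1 := mul_le_mul_of_nonneg_right hAge hΔ0
              linarith
    by_cases hdpos : Φ xbar < Φ (x k)
    · by_cases hΔcase : C m - C n < τ/2 * (C n - Φ xbar)
      · -- hard case: use KL
        have hKLk := hKL k (le_trans hKktil hkK) hdpos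
        -- sum bound
        have hsum : (∑ i ∈ Finset.Icc (k - k1) (k + k1), Real.sqrt (C (i-1) - C i))
            ≤ (p:ℝ) * Real.sqrt (C m - C n) := by
          have hcard : (Finset.Icc (k - k1) (k + k1)).card = p := by
            rw [Nat.card_Icc]; omega
          have hbound : ∀ i ∈ Finset.Icc (k - k1) (k + k1),
              Real.sqrt (C (i-1) - C i) ≤ Real.sqrt (C m - C n) := by
            intro i hi
            rw [Finset.mem_Icc] at hi
            apply Real.sqrt_le_sqrt
            have e1 : C (i-1) ≤ C m := hCanti (by omega : m ≤ i-1)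
            have e2 : C n ≤ C i := hCanti (by omega : i ≤ n)
            linarith
          calc (∑ i ∈ Finset.Icc (k - k1) (k + k1), Real.sqrt (C (i-1) - C i))
              ≤ (Finset.Icc (k - k1) (k + k1)).card • Real.sqrt (C m - C n) :=
                Finset.sum_le_card_nsmul _ _ _ hbound
            _ = (p:ℝ) * Real.sqrt (C m - C n) := by rw [hcard, nsmul_eq_mul]
        -- d ≥ rn/2
        have hd2 : (C n - Φ xbar)/2 ≤ Φ (x k) - Φ xbar := by
          have e1 : C (k-1) - C k ≤ C m - C n := by linarith
          have e2 : τ * (C n - Φ xbar) ≤ τs k * (C n - Φ xbar) :=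
            mul_le_mul_of_nonneg_right hτl hrn0
          have e3 : τs k * (C n - Φ xbar) ≤ τs k * (C (k-1) - Φ xbar) :=
            mul_le_mul_of_nonneg_left (by linarith) hτkpos.le
          have e4 : τs k * (Φ (x k) - Φ xbar) = τs k * (C (k-1) - Φ xbar) - (C (k-1) - C k) := by
            linear_combination h1drop
          have e5 : τs k * ((C n - Φ xbar)/2) ≤ τs k * (Φ (x k) - Φ xbar) := by
            linarith
          exact le_of_mul_le_mul_left e5 hτkpos
        have hdθ : ((C n - Φ xbar)/2)^θ ≤ (Φ (x k) - Φ xbar)^θ :=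
          Real.rpow_le_rpow (by positivity) hd2 (by linarith)
        have hRHS : (Φ (x k) - Φ xbar)^θ ≤ κ * ((p:ℝ)*Real.sqrt (C m - C n) + eps k) := by
          refine le_trans hKLk ?_
          exact mul_le_mul_of_nonneg_left (add_le_add_left hsum _) hκ.le
        have hLnn : 0 ≤ ((C n - Φ xbar)/2)^θ := Real.rpow_nonneg (by positivity) _
        have hsq : (((C n - Φ xbar)/2)^θ)^2 ≤ (κ * ((p:ℝ)*Real.sqrt (C m - C n) + eps k))^2 :=
          pow_le_pow_left₀ hLnn (le_trans hdθ hRHS) 2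
        have hid : (((C n - Φ xbar)/2)^θ)^2 = ((C n - Φ xbar)/2)^(2*θ) := by
          rw [← Real.rpow_natCast (((C n - Φ xbar)/2)^θ) 2, ← Real.rpow_mul (by positivity)]
          norm_num [mul_comm]
        have hq : (C n - Φ xbar)^(2*θ) ≤ 4 * (((C n - Φ xbar)/2)^(2*θ)) := by
          have h24 : ((2:ℝ))^(2*θ) ≤ 4 := by
            calc (2:ℝ)^(2*θ) ≤ (2:ℝ)^(2:ℝ) :=
                  Real.rpow_le_rpow_of_exponent_le one_le_two (by linarith)
              _ = 4 := by rw [Real.rpow_two]; norm_num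
          have heq2 : C n - Φ xbar = 2 * ((C n - Φ xbar)/2) := by ring
          conv_lhs => rw [heq2]
          rw [Real.mul_rpow (by norm_num) (by positivity)]
          have h0 : 0 ≤ ((C n - Φ xbar)/2)^(2*θ) := Real.rpow_nonneg (by positivity) _
          exact mul_le_mul_of_nonneg_right h24 h0
        have hε := heps k (by omega)
        have hexpand : (κ * ((p:ℝ)*Real.sqrt (C m - C n) + eps k))^2
            ≤ 2*κ^2*(p:ℝ)^2*(C m - C n) + 2*κ^2*(eps k)^2 :=
          aux_sq κ (p:ℝ) (C m - C n) (eps k) hΔ0 hε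
        -- eps bound
        have hepsk := hepsdecay k (le_trans hKktil0 hkK)
        have hkposR : (0:ℝ) < (k:ℝ) := by exact_mod_cast (by omega : 0 < k)
        have heps2 : (eps k)^2 ≤ γtil^2 * (k:ℝ)^(-β-1) := by
          have h1 : (eps k)^2 ≤ (γtil * (k:ℝ)^(θ/(1-2*θ)))^2 := pow_le_pow_left₀ hε hepsk 2
          have h2 : ((k:ℝ)^(θ/(1-2*θ)))^2 = (k:ℝ)^(-β-1) := by
            rw [← Real.rpow_natCast ((k:ℝ)^(θ/(1-2*θ))) 2, ← Real.rpow_mul hkposR.le]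
            congr 1
            rw [div_mul_eq_mul_div, div_eq_iff (by linarith : (1:ℝ)-2*θ ≠ 0)]
            linear_combination -hβm
          rw [mul_pow, h2] at h1
          exact h1
        have hkn : (k:ℝ)^(-β-1) ≤ 2^(β+1) * (n:ℝ)^(-β-1) := by
          have hle : (n:ℝ)/2 ≤ (k:ℝ) := by
            have h1 : n ≤ 2*k := by omega
            have h2 : (n:ℝ) ≤ 2*(k:ℝ) := by exact_mod_cast h1
            linarith
          have hmono := Real.rpow_le_rpow_of_nonpos
            (show (0:ℝ) < (n:ℝ)/2 by positivity) hle (by linarith : -β-1 ≤ 0)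
          have heq : ((n:ℝ)/2)^(-β-1) = 2^(β+1) * (n:ℝ)^(-β-1) := by
            rw [Real.div_rpow hnpos.le (by norm_num), div_eq_mul_inv,
              ← Real.rpow_neg (by norm_num : (0:ℝ) ≤ 2),
              show -(-β-1) = β+1 by ring]
            ring
          rw [heq] at hmono
          exact hmono
        -- combine
        have h2pow : (0:ℝ) < 2^(β+1) := by positivity
        have hfin1 : (eps k)^2 ≤ γtil^2 * (2^(β+1) * (n:ℝ)^(-β-1)) := by
          have := mul_le_mul_of_nonneg_left hkn (by positivity : (0:ℝ) ≤ γtil^2)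
          linarith
        have hsimp : (C m - Φ xbar) - (C n - Φ xbar) = C m - C n := by ring
        rw [hsimp]
        calc (C n - Φ xbar)^(2*θ) ≤ 4 * (((C n - Φ xbar)/2)^(2*θ)) := hq
          _ = 4 * ((((C n - Φ xbar)/2)^θ)^2) := by rw [hid]
          _ ≤ 4 * ((κ * ((p:ℝ)*Real.sqrt (C m - C n) + eps k))^2) := by linarith
          _ ≤ 4 * (2*κ^2*(p:ℝ)^2*(C m - C n) + 2*κ^2*(eps k)^2) := by linarith
          _ ≤ A * (C m - C n) + B' * (n:ℝ)^(-β-1) := by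
              have hterm : 8*κ^2*(eps k)^2 ≤ B' * (n:ℝ)^(-β-1) := by
                have h := mul_le_mul_of_nonneg_left hfin1 (by positivity : (0:ℝ) ≤ 8*κ^2)
                rw [hBdef]
                linarith
              have hterm2 : 8*κ^2*(p:ℝ)^2*(C m - C n) ≤ A * (C m - C n) := by
                apply mul_le_mul_of_nonneg_right _ hΔ0
                rw [hAdef]
                have : (0:ℝ) ≤ 4/τ^2 := by positivity
                linarith
              linarith
      · -- moderate drop: easy case
        push_neg at hΔcase
        exact heasy (by linarith)
    · -- Φ (x k) ≤ Φ xbar: strong contraction, easy case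
      push_neg at hdpos
      apply heasy
      have e1 : τs k * (C (k-1) - Φ xbar) ≤ τs k * (C (k-1) - Φ (x k)) :=
        mul_le_mul_of_nonneg_left (by linarith) hτkpos.le
      have e2 : τ * (C (k-1) - Φ xbar) ≤ τs k * (C (k-1) - Φ xbar) :=
        mul_le_mul_of_nonneg_right hτl (by linarith)
      have e3 : τ * (C n - Φ xbar) ≤ τ * (C (k-1) - Φ xbar) :=
        mul_le_mul_of_nonneg_left (by linarith) hτ0.le
      linarith
  -- apply the rate lemma
  have hranti : Antitone (fun j => C j - Φ xbar) := fun i j hij => by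
    have := hCanti hij; simp only; linarith
  obtain ⟨γ, hγpos, hγ⟩ := aux_rate θ β A B' hθ0 hθ hβ hA hB' p N0
    (by omega)
    (le_trans (by omega : 1 ≤ 2*p+1) (le_max_right (K + k1) (2*p+1)))
    (le_trans (by omega : 2*p ≤ 2*p+1) (le_max_right (K + k1) (2*p+1)))
    (fun j => C j - Φ xbar) hr0 hranti hrec
  refine ⟨γ, hγpos, ?_⟩
  rw [Filter.eventually_atTop]
  refine ⟨N0, fun n hn => ?_⟩
  rw [hexp_eq]
  exact hγ n hn
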